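/- Let X be a Hausdorff topological space, Ψ : X → ℝⁿ a continuous map, w₀ ∈ ℝⁿ, and {U_i}_{i=1}^N a finite collection of open subsets of X whose union contains Ψ⁻¹(w₀), such that for each i the restriction Ψ|_{U_i} : U_i → Ψ(U_i) is a convex map and an open map onto its image. Let [x] be a connected component of Ψ⁻¹(w₀), and let ε > 0 be such that Ψ(U_k) ∩ B(w₀,ε) = Ψ(U_l) ∩ B(w₀,ε) whenever U_k ∩ [x] ≠ ∅ and U_l ∩ [x] ≠ ∅, and Ψ(U_i) ∩ B(w₀,ε) = Ψ(U_i ∩ U_j) ∩ B(w₀,ε) whenever U_i ∩ U_j ∩ [x] ≠ ∅. Set Ũ_{[x],ε} = ⋃_{i : U_i ∩ [x] ≠ ∅} (U_i ∩ Ψ⁻¹(B(w₀,ε))). Then the restriction Ψ|_{Ũ_{[x],ε}} : Ũ_{[x],ε} → Ψ(Ũ_{[x],ε}) is a convex map and is an open map onto its image. -/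

import Mathlib

open Set Metric

/-- A path `c : ℝ → ℝⁿ`, considered on `[0,1]`, is *monotone straight* if either it is
constant, or its image is the segment `[c 0, c 1]` and it parametrizes this segment
weakly monotonically. -/
def MonotoneStraight {n : ℕ} (c : ℝ → EuclideanSpace ℝ (Fin n)) : Prop :=
  (∀ t ∈ Set.Icc (0:ℝ) 1, c t = c 0) ∨
  ((c '' Set.Icc (0:ℝ) 1 = segment ℝ (c 0) (c 1)) ∧
   ∀ t₁ t₂ t₃ : ℝ, 0 ≤ t₁ → t₁ < t₂ → t₂ < t₃ → t₃ ≤ 1 →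
     c t₂ ∈ segment ℝ (c t₁) (c t₃))

/-- The restriction of `Ψ` to `U` is a *convex map*: any two points of `U` are joined by a
continuous path in `U` whose composition with `Ψ` is monotone straight. -/
def IsConvexMapOn {n : ℕ} {X : Type*} [TopologicalSpace X]
    (Ψ : X → EuclideanSpace ℝ (Fin n)) (U : Set X) : Prop :=
  ∀ x₀ ∈ U, ∀ x₁ ∈ U, ∃ γ : ℝ → X,
    ContinuousOn γ (Set.Icc 0 1) ∧ (∀ t ∈ Set.Icc (0:ℝ) 1, γ t ∈ U) ∧
    γ 0 = x₀ ∧ γ 1 = x₁ ∧ MonotoneStraight (Ψ ∘ γ)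

/-- The restriction `Ψ|_U : U → Ψ(U)` is an open map onto its image: the image of every
relatively open subset of `U` is relatively open in `Ψ(U)`. -/
def IsOpenOnto {n : ℕ} {X : Type*} [TopologicalSpace X]
    (Ψ : X → EuclideanSpace ℝ (Fin n)) (U : Set X) : Prop :=
  ∀ O : Set X, IsOpen O → ∃ V : Set (EuclideanSpace ℝ (Fin n)),
    IsOpen V ∧ Ψ '' (O ∩ U) = V ∩ Ψ '' U

/-- The `Ψ`-distance: the infimum of the lengths (total variations) of `Ψ ∘ γ` over all
continuous paths `γ` in `X` from `x₀` to `x₁`; takes values in `[0,∞]`. -/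
noncomputable def psiDist {n : ℕ} {X : Type*} [TopologicalSpace X]
    (Ψ : X → EuclideanSpace ℝ (Fin n)) (x₀ x₁ : X) : ENNReal :=
  ⨅ γ ∈ {γ : ℝ → X | ContinuousOn γ (Set.Icc 0 1) ∧ γ 0 = x₀ ∧ γ 1 = x₁},
    eVariationOn (Ψ ∘ γ) (Set.Icc 0 1)

/-- The set Ũ_{[x],ε}: the union, over the cover members meeting the component C, of
their intersections with the preimage of the ε-ball around w₀. -/
def tildeU {n : ℕ} {X : Type*} [TopologicalSpace X] {N : ℕ}
    (Ψ : X → EuclideanSpace ℝ (Fin n)) (U : Fin N → Set X)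
    (w₀ : EuclideanSpace ℝ (Fin n)) (ε : ℝ) (C : Set X) : Set X :=
  ⋃ i ∈ {i : Fin N | (U i ∩ C).Nonempty}, U i ∩ Ψ ⁻¹' (Metric.ball w₀ ε)

lemma monotoneStraight_const {n : ℕ} {c : ℝ → EuclideanSpace ℝ (Fin n)}
    (h : MonotoneStraight c) (he : c 1 = c 0) : ∀ t ∈ Set.Icc (0:ℝ) 1, c t = c 0 := by
  rcases h with h | ⟨him, -⟩
  · exact h
  · intro t ht
    have hm : c t ∈ c '' Set.Icc (0:ℝ) 1 := mem_image_of_mem _ ht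
    rw [him, he, segment_same] at hm
    exact hm

def CJoined {n : ℕ} {X : Type*} [TopologicalSpace X]
    (Ψ : X → EuclideanSpace ℝ (Fin n)) (S : Set X)
    (w : EuclideanSpace ℝ (Fin n)) (a b : X) : Prop :=
  ∃ γ : Path a b, (∀ t, γ t ∈ S) ∧ ∀ t, Ψ (γ t) = w

lemma CJoined.trans {n : ℕ} {X : Type*} [TopologicalSpace X]
    {Ψ : X → EuclideanSpace ℝ (Fin n)} {S : Set X}
    {w : EuclideanSpace ℝ (Fin n)} {a b c : X}
    (h₁ : CJoined Ψ S w a b) (h₂ : CJoined Ψ S w b c) : CJoined Ψ S w a c := by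
  obtain ⟨γ, hγS, hγw⟩ := h₁
  obtain ⟨γ', hγ'S, hγ'w⟩ := h₂
  refine ⟨γ.trans γ', fun t => ?_, fun t => ?_⟩
  · have hr : (γ.trans γ') t ∈ range (γ.trans γ') := mem_range_self t
    rw [Path.trans_range] at hr
    rcases hr with ⟨s, hs⟩ | ⟨s, hs⟩ <;> rw [← hs]
    exacts [hγS s, hγ'S s]
  · have hr : (γ.trans γ') t ∈ range (γ.trans γ') := mem_range_self t
    rw [Path.trans_range] at hr
    rcases hr with ⟨s, hs⟩ | ⟨s, hs⟩ <;> rw [← hs]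
    exacts [hγw s, hγ'w s]

lemma mem_tildeU {n : ℕ} {X : Type*} [TopologicalSpace X] {N : ℕ}
    {Ψ : X → EuclideanSpace ℝ (Fin n)} {U : Fin N → Set X}
    {w₀ : EuclideanSpace ℝ (Fin n)} {ε : ℝ} {C : Set X} {k : Fin N}
    (hk : (U k ∩ C).Nonempty) {z : X} (hz : z ∈ U k)
    (hzb : Ψ z ∈ Metric.ball w₀ ε) : z ∈ tildeU Ψ U w₀ ε C :=
  mem_biUnion hk ⟨hz, hzb⟩

/-- Within one chart, points of equal `Ψ`-value in the ball are joined by a `Ψ`-constant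
path inside `tildeU`. -/
lemma chartJoin {n : ℕ} {X : Type*} [TopologicalSpace X] {N : ℕ}
    {Ψ : X → EuclideanSpace ℝ (Fin n)} {U : Fin N → Set X}
    {w₀ : EuclideanSpace ℝ (Fin n)} {ε : ℝ} {C : Set X} {k : Fin N}
    (hconv : IsConvexMapOn Ψ (U k)) (hk : (U k ∩ C).Nonempty)
    {a b : X} {w : EuclideanSpace ℝ (Fin n)}
    (ha : a ∈ U k) (hb : b ∈ U k) (hwa : Ψ a = w) (hwb : Ψ b = w)
    (hw : w ∈ Metric.ball w₀ ε) : CJoined Ψ (tildeU Ψ U w₀ ε C) w a b := by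
  obtain ⟨γ, hγc, hγmem, hγ0, hγ1, hms⟩ := hconv a ha b hb
  have he : (Ψ ∘ γ) 1 = (Ψ ∘ γ) 0 := by
    simp only [Function.comp_apply, hγ0, hγ1, hwa, hwb]
  have hconst : ∀ t ∈ Set.Icc (0:ℝ) 1, Ψ (γ t) = w := by
    intro t ht
    have := monotoneStraight_const hms he t ht
    simpa [Function.comp_apply, hγ0, hwa] using this
  have hcontP : Continuous fun t : unitInterval => γ t :=
    hγc.comp_continuous continuous_subtype_val fun t => t.2
  refine ⟨⟨⟨fun t : unitInterval => γ t, hcontP⟩, hγ0, hγ1⟩, fun t => ?_, fun t => ?_⟩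
  · show γ (t:ℝ) ∈ tildeU Ψ U w₀ ε C
    exact mem_tildeU hk (hγmem t t.2) (by rw [hconst t t.2]; exact hw)
  · exact hconst t t.2

/-- If each restriction Ψ|_{U i} is a convex map and open onto its image, then the
restriction of Ψ to Ũ_{[x],ε} is a convex map and open onto its image. -/
theorem convex_open_on_tildeU {n : ℕ} {X : Type*} [TopologicalSpace X]
    [T2Space X] {N : ℕ}
    (Ψ : X → EuclideanSpace ℝ (Fin n)) (hcont : Continuous Ψ)
    (w₀ : EuclideanSpace ℝ (Fin n))
    (U : Fin N → Set X) (hUopen : ∀ i, IsOpen (U i)) (hcover : Ψ ⁻¹' {w₀} ⊆ ⋃ i, U i)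
    (hUconv : ∀ i, IsConvexMapOn Ψ (U i))
    (hUopenOnto : ∀ i, IsOpenOnto Ψ (U i))
    (x : X) (hx : x ∈ Ψ ⁻¹' {w₀}) (ε : ℝ) (hε : 0 < ε)
    (heps₁ : ∀ i j : Fin N,
      (U i ∩ U j ∩ connectedComponentIn (Ψ ⁻¹' {w₀}) x).Nonempty →
      Ψ '' U i ∩ Metric.ball w₀ ε = Ψ '' (U i ∩ U j) ∩ Metric.ball w₀ ε)
    (heps₂ : ∀ k l : Fin N,
      (U k ∩ connectedComponentIn (Ψ ⁻¹' {w₀}) x).Nonempty →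
      (U l ∩ connectedComponentIn (Ψ ⁻¹' {w₀}) x).Nonempty →
      Ψ '' U k ∩ Metric.ball w₀ ε = Ψ '' U l ∩ Metric.ball w₀ ε) :
    IsConvexMapOn Ψ (tildeU Ψ U w₀ ε (connectedComponentIn (Ψ ⁻¹' {w₀}) x)) ∧
    IsOpenOnto Ψ (tildeU Ψ U w₀ ε (connectedComponentIn (Ψ ⁻¹' {w₀}) x)) := by
  set C := connectedComponentIn (Ψ ⁻¹' {w₀}) x with hCdef
  have hxC : x ∈ C := mem_connectedComponentIn hx
  have hCsub : C ⊆ Ψ ⁻¹' {w₀} := connectedComponentIn_subset _ _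
  set Ut := tildeU Ψ U w₀ ε C with hUt
  have hmemUt : ∀ z, z ∈ Ut ↔ ∃ i, (U i ∩ C).Nonempty ∧ z ∈ U i ∧ Ψ z ∈ Metric.ball w₀ ε := by
    intro z
    simp only [hUt, tildeU, mem_iUnion, mem_inter_iff, mem_preimage, mem_setOf_eq, exists_prop]
  constructor
  · -- convexity
    intro x₀ hx₀ x₁ hx₁
    obtain ⟨i, hiS, hx₀U, hx₀b⟩ := (hmemUt x₀).mp hx₀
    obtain ⟨j, hjS, hx₁U, hx₁b⟩ := (hmemUt x₁).mp hx₁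
    set w := Ψ x₁ with hwdef
    have hwball : w ∈ Metric.ball w₀ ε := hx₁b
    -- find y ∈ U i over w
    have hwUi : w ∈ Ψ '' U i ∩ Metric.ball w₀ ε := by
      rw [heps₂ i j hiS hjS]
      exact ⟨mem_image_of_mem _ hx₁U, hwball⟩
    obtain ⟨⟨y, hyUi, hyw⟩, -⟩ := hwUi
    obtain ⟨γ₁, hγ₁c, hγ₁mem, hγ₁0, hγ₁1, hms⟩ := hUconv i x₀ hx₀U y hyUi
    set d := Ψ ∘ γ₁ with hd
    have hd0 : d 0 = Ψ x₀ := by simp [hd, hγ₁0]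
    have hd1 : d 1 = w := by simp [hd, hγ₁1, hyw]
    have hdball : ∀ t ∈ Icc (0:ℝ) 1, d t ∈ Metric.ball w₀ ε := by
      rcases hms with hcst | ⟨him, -⟩
      · intro t ht; rw [hcst t ht, hd0]; exact hx₀b
      · intro t ht
        have hmem : d t ∈ segment ℝ (d 0) (d 1) := him ▸ mem_image_of_mem _ ht
        exact (convex_ball w₀ ε).segment_subset (hd0 ▸ hx₀b) (hd1 ▸ hwball) hmem
    -- chain argument: ConstJoined y x₁ inside Ut
    have hchain : CJoined Ψ Ut w y x₁ := by
      set T : Set (Fin N) :=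
        {k | (U k ∩ C).Nonempty ∧ ∃ z, z ∈ U k ∧ Ψ z = w ∧ CJoined Ψ Ut w y z} with hT
      have hiT : i ∈ T := by
        refine ⟨hiS, y, hyUi, hyw, ⟨Path.refl y, fun t => ?_, fun t => ?_⟩⟩
        · simp only [Path.refl_apply]
          exact mem_tildeU hiS hyUi (by rw [hyw]; exact hwball)
        · simp only [Path.refl_apply]; exact hyw
      have hstep : ∀ k ∈ T, ∀ l, (U l ∩ C).Nonempty → (U k ∩ U l ∩ C).Nonempty → l ∈ T := by
        intro k hk l hlS hkl
        obtain ⟨hkS, z, hzU, hzw, hyz⟩ := hk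
        have h1 : w ∈ Ψ '' (U k ∩ U l) ∩ Metric.ball w₀ ε := by
          rw [← heps₁ k l hkl]
          exact ⟨⟨z, hzU, hzw⟩, hwball⟩
        obtain ⟨⟨z', ⟨hz'k, hz'l⟩, hz'w⟩, -⟩ := h1
        exact ⟨hlS, z', hz'l, hz'w,
          hyz.trans (chartJoin (hUconv k) hkS hzU hz'k hzw hz'w hwball)⟩
      have hjT : j ∈ T := by
        by_contra hjT
        set A := ⋃ k ∈ T, U k with hA
        set B := ⋃ k ∈ {k | (U k ∩ C).Nonempty ∧ k ∉ T}, U k with hB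
        have hAopen : IsOpen A := isOpen_biUnion fun k _ => hUopen k
        have hBopen : IsOpen B := isOpen_biUnion fun k _ => hUopen k
        have hcovAB : C ⊆ A ∪ B := by
          intro c hc
          obtain ⟨k, hck⟩ := mem_iUnion.mp (hcover (hCsub hc))
          by_cases hkT : k ∈ T
          · exact Or.inl (mem_biUnion hkT hck)
          · exact Or.inr (mem_biUnion ⟨⟨c, hck, hc⟩, hkT⟩ hck)
        have hCA : (C ∩ A).Nonempty := by
          obtain ⟨p, hpU, hpC⟩ := hiS
          exact ⟨p, hpC, mem_biUnion hiT hpU⟩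
        have hCB : (C ∩ B).Nonempty := by
          obtain ⟨q, hqU, hqC⟩ := hjS
          exact ⟨q, hqC, mem_biUnion ⟨⟨q, hqU, hqC⟩, hjT⟩ hqU⟩
        obtain ⟨c, hcC, hcA, hcB⟩ :=
          isPreconnected_connectedComponentIn A B hAopen hBopen hcovAB hCA hCB
        obtain ⟨k, hkT, hck⟩ := mem_iUnion₂.mp hcA
        obtain ⟨l, ⟨hlS, hlT⟩, hcl⟩ := mem_iUnion₂.mp hcB
        exact hlT (hstep k hkT l hlS ⟨c, ⟨hck, hcl⟩, hcC⟩)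
      obtain ⟨-, z, hzU, hzw, hyz⟩ := hjT
      exact hyz.trans (chartJoin (hUconv j) hjS hzU hx₁U hzw rfl hwball)
    obtain ⟨P₂, hP₂mem, hP₂w⟩ := hchain
    have hcontP₁ : Continuous fun t : unitInterval => γ₁ t :=
      hγ₁c.comp_continuous continuous_subtype_val fun t => t.2
    set P₁ : Path x₀ y := ⟨⟨fun t : unitInterval => γ₁ t, hcontP₁⟩, hγ₁0, hγ₁1⟩ with hP₁
    -- computation lemmas
    have hc₁ : ∀ t : ℝ, 0 ≤ t → t ≤ 1/2 → Ψ ((P₁.trans P₂).extend t) = d (2*t) := by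
      intro t h0 h12
      have ht : t ∈ Icc (0:ℝ) 1 := ⟨h0, h12.trans (by norm_num)⟩
      rw [(P₁.trans P₂).extend_apply ht, Path.trans_apply]
      rw [dif_pos (show ((⟨t, ht⟩ : unitInterval) : ℝ) ≤ 1/2 from h12)]
      rfl
    have hc₂ : ∀ t : ℝ, 1/2 ≤ t → t ≤ 1 → Ψ ((P₁.trans P₂).extend t) = w := by
      intro t h12 h1
      have ht : t ∈ Icc (0:ℝ) 1 := ⟨le_trans (by norm_num) h12, h1⟩
      rw [(P₁.trans P₂).extend_apply ht, Path.trans_apply]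
      by_cases h : ((⟨t, ht⟩ : unitInterval) : ℝ) ≤ 1/2
      · rw [dif_pos h]
        show Ψ (γ₁ (2*t)) = w
        have h2 : t = 1/2 := le_antisymm h h12
        rw [show (2:ℝ)*t = 1 by rw [h2]; norm_num, hγ₁1, hyw]
      · rw [dif_neg h]
        exact hP₂w _
    have hmem : ∀ t ∈ Icc (0:ℝ) 1, (P₁.trans P₂).extend t ∈ Ut := by
      intro t ht
      rw [(P₁.trans P₂).extend_apply ht]
      have hr : (P₁.trans P₂) ⟨t, ht⟩ ∈ range (P₁.trans P₂) := mem_range_self _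
      rw [Path.trans_range] at hr
      rcases hr with ⟨s, hs⟩ | ⟨s, hs⟩ <;> rw [← hs]
      · exact mem_tildeU hiS (hγ₁mem s s.2) (hdball s s.2)
      · exact hP₂mem s
    refine ⟨(P₁.trans P₂).extend, (P₁.trans P₂).continuous_extend.continuousOn, hmem,
      (P₁.trans P₂).extend_zero, (P₁.trans P₂).extend_one, ?_⟩
    rcases hms with hcst | ⟨him, hmono⟩
    · -- the composition is constant
      left
      have hval : ∀ t ∈ Icc (0:ℝ) 1, Ψ ((P₁.trans P₂).extend t) = d 0 := by
        intro t ht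
        by_cases h : t ≤ 1/2
        · rw [hc₁ t ht.1 h]
          exact hcst (2*t) ⟨by linarith [ht.1], by linarith⟩
        · rw [hc₂ t (le_of_not_ge h) ht.2, ← hd1]
          exact hcst 1 ⟨zero_le_one, le_rfl⟩
      intro t ht
      simp only [Function.comp_apply]
      rw [hval t ht, hval 0 ⟨le_rfl, zero_le_one⟩]
    · right
      have hce0 : Ψ ((P₁.trans P₂).extend 0) = d 0 := by
        rw [hc₁ 0 le_rfl (by norm_num), mul_zero]
      have hce1 : Ψ ((P₁.trans P₂).extend 1) = d 1 := by
        rw [hc₂ 1 (by norm_num) le_rfl, hd1]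
      constructor
      · -- image is the segment
        apply Subset.antisymm
        · rintro v ⟨t, ht, rfl⟩
          simp only [Function.comp_apply, hce0, hce1]
          by_cases h : t ≤ 1/2
          · rw [hc₁ t ht.1 h, ← him]
            exact mem_image_of_mem _ ⟨by linarith [ht.1], by linarith⟩
          · rw [hc₂ t (le_of_not_ge h) ht.2, ← hd1]
            exact right_mem_segment ℝ _ _
        · intro v hv
          simp only [Function.comp_apply, hce0, hce1] at hv
          rw [← him] at hv
          obtain ⟨s, hs, rfl⟩ := hv
          refine ⟨s/2, ⟨by linarith [hs.1], by linarith [hs.2]⟩, ?_⟩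
          simp only [Function.comp_apply]
          rw [hc₁ (s/2) (by linarith [hs.1]) (by linarith [hs.2])]
          congr 1
          ring
      · intro t₁ t₂ t₃ h0 h12 h23 h31
        simp only [Function.comp_apply]
        by_cases h2 : t₂ < 1/2
        · rw [hc₁ t₁ h0 (by linarith), hc₁ t₂ (by linarith) h2.le]
          by_cases h3 : t₃ ≤ 1/2
          · rw [hc₁ t₃ (by linarith) h3]
            exact hmono (2*t₁) (2*t₂) (2*t₃) (by linarith) (by linarith) (by linarith)
              (by linarith)
          · rw [hc₂ t₃ (le_of_not_ge h3) h31, ← hd1]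
            exact hmono (2*t₁) (2*t₂) 1 (by linarith) (by linarith) (by linarith) le_rfl
        · rw [hc₂ t₂ (le_of_not_gt h2) (by linarith), hc₂ t₃ (by linarith) h31]
          exact right_mem_segment ℝ _ _
  · -- openness
    intro O hO
    have hO' : IsOpen (O ∩ Ψ ⁻¹' (Metric.ball w₀ ε)) := hO.inter (isOpen_ball.preimage hcont)
    choose V hVopen hVeq using fun i : Fin N => hUopenOnto i _ hO'
    refine ⟨⋃ i ∈ {i : Fin N | (U i ∩ C).Nonempty}, V i ∩ Metric.ball w₀ ε,
      isOpen_biUnion fun i _ => (hVopen i).inter isOpen_ball, ?_⟩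
    apply Subset.antisymm
    · rintro v ⟨z, ⟨hzO, hzUt⟩, rfl⟩
      obtain ⟨i, hiS, hzU, hzb⟩ := (hmemUt z).mp hzUt
      have h1 : Ψ z ∈ V i ∩ Ψ '' U i := by
        rw [← hVeq i]
        exact ⟨z, ⟨⟨hzO, hzb⟩, hzU⟩, rfl⟩
      exact ⟨mem_biUnion hiS ⟨h1.1, hzb⟩, ⟨z, hzUt, rfl⟩⟩
    · rintro v ⟨hvV, z', hz'Ut, rfl⟩
      obtain ⟨i, hiS, hvVi, hvb⟩ := mem_iUnion₂.mp hvV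
      obtain ⟨j, hjS, hz'U, hz'b⟩ := (hmemUt z').mp hz'Ut
      have h1 : Ψ z' ∈ Ψ '' U i ∩ Metric.ball w₀ ε := by
        rw [heps₂ i j hiS hjS]
        exact ⟨mem_image_of_mem _ hz'U, hz'b⟩
      have h2 : Ψ z' ∈ Ψ '' (O ∩ Ψ ⁻¹' (Metric.ball w₀ ε) ∩ U i) := by
        rw [hVeq i]
        exact ⟨hvVi, h1.1⟩
      obtain ⟨z, ⟨⟨hzO, hzb⟩, hzU⟩, hzΨ⟩ := h2
      exact ⟨z, ⟨hzO, (hmemUt z).mpr ⟨i, hiS, hzU, hzb⟩⟩, hzΨ⟩
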